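/- Let G = (V,E) be a finite graph and v a simplicial vertex. Define σ : X(G\v) → ℂ^V by σ(z)_u = z_u for u ≠ v and σ(z)_v = (1 + Σ_{u ∈ N(v)} |z_u|²)^{1/2}. Then σ maps X(G\v) into X(G), is continuous, and is a section of the restriction map X(G) → X(G\v). -/

import Mathlib

set_option maxHeartbeats 1000000

def SimpleGraph.IsSimplicialVertex {V : Type*} (G : SimpleGraph V) (v : V) : Prop :=
  G.IsClique (G.neighborSet v)

/-- The complement of the graphical arrangement of `G`. -/
def arrComplement {V : Type*} (G : SimpleGraph V) : Set (V → ℂ) :=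
  {z | ∀ ⦃i j : V⦄, G.Adj i j → z i ≠ z j}

/-- The Falk–Randell section `σ` of the restriction map `X(G) → X(G∖v)`. -/
noncomputable def frSection {V : Type*} [Fintype V] [DecidableEq V]
    (G : SimpleGraph V) [DecidableRel G.Adj] (v : V)
    (z : {u : V // u ≠ v} → ℂ) : V → ℂ :=
  fun u =>
    if h : u = v then
      (Real.sqrt (1 + ∑ w ∈ (G.neighborFinset v).attach,
        ‖z ⟨w.1, ((G.mem_neighborFinset v w.1).mp w.2).ne'⟩‖ ^ 2) : ℂ)
    else z ⟨u, h⟩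

lemma frSection_scalar_key (S : ℝ) (c : ℂ) (h : ‖c‖ ^ 2 ≤ S) :
    c ≠ (Real.sqrt (1 + S) : ℂ) := by
  have hlt : ‖c‖ < Real.sqrt (1 + S) := by
    rw [Real.lt_sqrt (norm_nonneg _)]
    linarith
  intro he
  have := congrArg (‖·‖) he
  rw [Complex.norm_real, Real.norm_eq_abs, abs_of_nonneg (Real.sqrt_nonneg _)] at this
  exact absurd this hlt.ne

lemma frSection_key {V : Type*} [Fintype V] [DecidableEq V]
    (G : SimpleGraph V) [DecidableRel G.Adj] (v j : V)
    (hj : G.Adj v j) (z : {u : V // u ≠ v} → ℂ) :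
    z ⟨j, hj.ne'⟩ ≠ (Real.sqrt (1 + ∑ w ∈ (G.neighborFinset v).attach,
        ‖z ⟨w.1, ((G.mem_neighborFinset v w.1).mp w.2).ne'⟩‖ ^ 2) : ℂ) := by
  apply frSection_scalar_key
  have hmem : j ∈ G.neighborFinset v := (G.mem_neighborFinset v j).mpr hj
  have := Finset.single_le_sum (s := (G.neighborFinset v).attach)
      (f := fun w => ‖z ⟨w.1, ((G.mem_neighborFinset v w.1).mp w.2).ne'⟩‖ ^ 2)
      (fun w _ => by positivity) (Finset.mem_attach _ ⟨j, hmem⟩)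
  exact this

theorem frSection_is_continuous_section {V : Type*} [Fintype V] [DecidableEq V]
    (G : SimpleGraph V) [DecidableRel G.Adj] (v : V) (hv : G.IsSimplicialVertex v) :
    (∀ z, z ∈ arrComplement (G.induce {u : V | u ≠ v}) →
        frSection G v z ∈ arrComplement G) ∧
    Continuous (frSection G v) ∧
    (∀ z : {u : V // u ≠ v} → ℂ,
        (fun u : {u : V // u ≠ v} => frSection G v z u.1) = z) := by
  refine ⟨?_, ?_, ?_⟩
  · intro z hz i j hij hconc
    by_cases hi : i = v
    · subst hi
      have hjv : j ≠ i := hij.ne'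
      unfold frSection at hconc
      rw [dif_pos rfl, dif_neg hjv] at hconc
      exact frSection_key G i j hij z hconc.symm
    · by_cases hjv : j = v
      · subst hjv
        unfold frSection at hconc
        rw [dif_pos rfl, dif_neg hi] at hconc
        exact frSection_key G j i hij.symm z hconc
      · simp only [frSection, dif_neg hi, dif_neg hjv] at hconc
        exact hz (show (G.induce {u : V | u ≠ v}).Adj ⟨i, hi⟩ ⟨j, hjv⟩ from hij) hconc
  · apply continuous_pi
    intro u
    by_cases h : u = v
    · subst h
      simp only [frSection, dif_pos rfl]
      exact Complex.continuous_ofReal.comp (Real.continuous_sqrt.comp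
        (continuous_const.add (continuous_finset_sum _ fun w _ =>
          (continuous_norm.comp (continuous_apply _)).pow 2)))
    · simp only [frSection, dif_neg h]
      exact continuous_apply _
  · intro z
    funext u
    simp [frSection, u.2]
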